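/- There is an absolute constant A₁ such that for every real s > 0 and every integer n with p := n − s ≥ 0 the following hold: if p < s then −ΔG_n(s) ≤ A₁·s^{−3/2}·p·exp(−p²/(4s)); and if p > s then −ΔG_n(s) ≤ A₁·p^{−1/2}·e^{−p/4}. -/

import Mathlib

set_option maxHeartbeats 800000

open Real

/-- The Poisson weights `G_n(t) = tⁿ e^{-t}/n!` for `n ≥ 0`, and `0` for `n < 0`. -/
noncomputable def PoissonG (n : ℤ) (t : ℝ) : ℝ :=
  if 0 ≤ n then t ^ n.toNat * Real.exp (-t) / (n.toNat.factorial : ℝ) else 0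

lemma aux_log_quad {x : ℝ} (h0 : 0 ≤ x) (h1 : x < 1) :
    Real.log (1 - x) ≤ -x - x^2/2 := by
  rcases eq_or_lt_of_le h0 with rfl | h0'
  · simp
  set f : ℝ → ℝ := fun y => -Real.log (1-y) - y - y^2/2 with hf
  have hder : ∀ y ∈ Set.Icc (0:ℝ) x, HasDerivAt f ((1-y)⁻¹ - 1 - y) y := by
    intro y hy
    have hne : (1:ℝ) - y ≠ 0 := by
      have := hy.2; nlinarith [hy.1]
    have h2 : HasDerivAt (fun y : ℝ => Real.log (1 - y)) ((1-y)⁻¹ * (-1)) y :=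
      (Real.hasDerivAt_log hne).comp y ((hasDerivAt_id y).const_sub 1)
    have h3 : HasDerivAt (fun y : ℝ => y^2/2) ((2 * y^1)/2) y :=
      (hasDerivAt_pow 2 y).div_const 2
    have := (h2.neg.sub (hasDerivAt_id y)).sub h3
    exact this.congr_deriv (by ring)
  have hmono : MonotoneOn f (Set.Icc 0 x) := by
    apply monotoneOn_of_deriv_nonneg (convex_Icc 0 x)
    · exact fun y hy => (hder y hy).continuousAt.continuousWithinAt
    · intro y hy
      rw [interior_Icc] at hy
      exact (hder y ⟨hy.1.le, hy.2.le⟩).differentiableAt.differentiableWithinAt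
    · intro y hy
      rw [interior_Icc] at hy
      rw [(hder y ⟨hy.1.le, hy.2.le⟩).deriv]
      have hy1 : 0 < 1 - y := by linarith [hy.2]
      have : (1-y)⁻¹ - 1 - y = y^2/(1-y) := by field_simp; ring
      rw [this]; positivity
  have := hmono (Set.left_mem_Icc.2 h0) (Set.right_mem_Icc.2 h0) h0
  simp only [hf] at this
  simp only [sub_zero, Real.log_one] at this
  nlinarith [this]

lemma aux_psi {r : ℝ} (h0 : 0 < r) (h1 : r ≤ 1/2) :
    Real.log r + 5/4 * (1 - r) ≤ 0 := by
  have h2 : Real.log (2*r) ≤ 2*r - 1 := Real.log_le_sub_one_of_pos (by linarith)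
  have h3 : Real.log (2*r) = Real.log 2 + Real.log r := Real.log_mul two_ne_zero h0.ne'
  have h4 : (0.6931471803 : ℝ) < Real.log 2 := Real.log_two_gt_d9
  nlinarith

lemma aux_stirling (N : ℕ) (hN : 1 ≤ N) :
    Real.sqrt N * ((N : ℝ) / Real.exp 1) ^ N ≤ (N.factorial : ℝ) := by
  obtain ⟨M, rfl⟩ := Nat.exists_eq_add_of_le hN
  set K := 1 + M with hK
  have h1 : Real.sqrt π ≤ Stirling.stirlingSeq K := by
    have ht : Filter.Tendsto (Stirling.stirlingSeq ∘ Nat.succ) Filter.atTop (nhds (Real.sqrt π)) :=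
      Stirling.tendsto_stirlingSeq_sqrt_pi.comp (Filter.tendsto_add_atTop_nat 1)
    have := Stirling.stirlingSeq'_antitone.le_of_tendsto ht M
    simpa [Nat.succ_eq_add_one, hK, Nat.add_comm] using this
  have hd : 0 < Real.sqrt (2 * K : ℝ) * ((K:ℝ)/Real.exp 1) ^ K := by
    have : (0:ℝ) < K := by positivity
    positivity
  rw [Stirling.stirlingSeq, le_div_iff₀ hd] at h1
  have hsp : 1 ≤ Real.sqrt π * Real.sqrt 2 := by
    rw [← Real.sqrt_mul Real.pi_nonneg]
    rw [show (1:ℝ) = Real.sqrt 1 by simp]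
    apply Real.sqrt_le_sqrt
    nlinarith [Real.pi_gt_three]
  have hsplit : Real.sqrt (2 * K : ℝ) = Real.sqrt 2 * Real.sqrt K := by
    rw [← Real.sqrt_mul (by norm_num)]
  calc Real.sqrt K * ((K:ℝ)/Real.exp 1) ^ K
      ≤ (Real.sqrt π * Real.sqrt 2) * (Real.sqrt K * ((K:ℝ)/Real.exp 1) ^ K) := by
        exact le_mul_of_one_le_left (by positivity) hsp
    _ = Real.sqrt π * (Real.sqrt (2*K:ℝ) * ((K:ℝ)/Real.exp 1) ^ K) := by rw [hsplit]; ring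
    _ ≤ (K.factorial : ℝ) := h1

/-- Lemma 6 ii): for `s > 0` and `p = n - s ≥ 0`:
`-ΔG_n(s) ≤ A₁ s^{-3/2} p exp(-p²/(4s))` if `p < s`, and
`-ΔG_n(s) ≤ A₁ p^{-1/2} e^{-p/4}` if `p > s`. -/
theorem stmt_14 :
    ∃ A₁ : ℝ, 0 < A₁ ∧
    ∀ s : ℝ, 0 < s → ∀ n : ℤ,
    ∀ p : ℝ, p = (n:ℝ) - s → 0 ≤ p →
      (p < s → -(PoissonG n s - PoissonG (n-1) s)
          ≤ A₁ * s ^ (-(3/2) : ℝ) * p * Real.exp (-p^2/(4*s))) ∧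
      (p > s → -(PoissonG n s - PoissonG (n-1) s)
          ≤ A₁ * p ^ (-(1/2) : ℝ) * Real.exp (-p/4)) := by
  refine ⟨Real.exp 2, Real.exp_pos 2, ?_⟩
  intro s hs n p hp hp0
  have hnR : (n:ℝ) = s + p := by rw [hp]; ring
  have hn1 : 1 ≤ n := by
    have h : (0:ℝ) < (n:ℝ) := by rw [hnR]; linarith
    exact_mod_cast h
  have hn : 0 ≤ n := by omega
  have hn0 : 0 ≤ n - 1 := by omega
  set N := n.toNat with hNdef
  have hNn : (N : ℤ) = n := Int.toNat_of_nonneg hn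
  have hN1 : 1 ≤ N := by omega
  have hNR : (N : ℝ) = s + p := by
    rw [← hnR]; exact_mod_cast congrArg (fun z : ℤ => (z:ℝ)) hNn
  have hNpos : (0:ℝ) < (N:ℝ) := by rw [hNR]; linarith
  have hn1t : (n-1).toNat = N - 1 := by omega
  have hfacpos : (0:ℝ) < (N.factorial : ℝ) := by exact_mod_cast N.factorial_pos
  -- the difference identity
  have hdiff : -(PoissonG n s - PoissonG (n-1) s)
      = (p / s) * (s ^ N * Real.exp (-s) / (N.factorial : ℝ)) := by
    obtain ⟨M, hM⟩ : ∃ M, N = M + 1 := ⟨N - 1, by omega⟩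
    rw [PoissonG, PoissonG, if_pos hn, if_pos hn0, hn1t, ← hNdef, hM]
    have hps : p = ((M:ℝ) + 1) - s := by
      have : ((M:ℝ) + 1) = s + p := by rw [← hNR, hM]; push_cast; ring
      linarith
    rw [Nat.factorial_succ]
    have hMfac : (0:ℝ) < (M.factorial : ℝ) := by exact_mod_cast M.factorial_pos
    simp only [Nat.add_sub_cancel]
    rw [hps]
    push_cast
    field_simp
    ring
  have hGpos : 0 < s ^ N * Real.exp (-s) / (N.factorial : ℝ) := by positivity
  set E := (N:ℝ) * Real.log s - (N:ℝ) * Real.log (N:ℝ) + (N:ℝ) - s with hE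
  have hsqrtNpos : 0 < Real.sqrt (N:ℝ) := Real.sqrt_pos.2 hNpos
  have hGle : s ^ N * Real.exp (-s) / (N.factorial : ℝ) ≤ Real.exp E / Real.sqrt (N:ℝ) := by
    have hnum : s ^ N * Real.exp (-s) = Real.exp ((N:ℝ) * Real.log s - s) := by
      rw [Real.exp_sub, Real.exp_nat_mul, Real.exp_log hs, Real.exp_neg, div_eq_mul_inv]
    have hden : ((N:ℝ)/Real.exp 1)^N = Real.exp ((N:ℝ) * Real.log (N:ℝ) - (N:ℝ)) := by
      rw [show (N:ℝ) * Real.log (N:ℝ) - (N:ℝ) = (N:ℝ) * (Real.log (N:ℝ) - 1) by ring,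
        Real.exp_nat_mul, Real.exp_sub, Real.exp_log hNpos]
    have hst := aux_stirling N hN1
    rw [hden] at hst
    have hdpos : 0 < Real.sqrt (N:ℝ) * Real.exp ((N:ℝ) * Real.log (N:ℝ) - (N:ℝ)) := by positivity
    calc s ^ N * Real.exp (-s) / (N.factorial : ℝ)
        ≤ s ^ N * Real.exp (-s) / (Real.sqrt (N:ℝ) * Real.exp ((N:ℝ) * Real.log (N:ℝ) - (N:ℝ))) := by
          gcongr
          all_goals exact hst
      _ = Real.exp E / Real.sqrt (N:ℝ) := by
          have hEeq : Real.exp E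
              = Real.exp ((N:ℝ) * Real.log s - s) / Real.exp ((N:ℝ) * Real.log (N:ℝ) - (N:ℝ)) := by
            rw [← Real.exp_sub]
            congr 1
            rw [hE]
            ring
          rw [hnum, hEeq]
          ring
  have hkey : -(PoissonG n s - PoissonG (n-1) s) ≤ (p/s) * (Real.exp E / Real.sqrt (N:ℝ)) := by
    rw [hdiff]
    exact mul_le_mul_of_nonneg_left hGle (by positivity)
  have hEe : E = (N:ℝ) * Real.log (s/(N:ℝ)) + p := by
    have hNs : (N:ℝ) - s = p := by linarith
    rw [hE, Real.log_div hs.ne' hNpos.ne']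
    linear_combination hNs
  constructor
  · -- case p < s
    intro hps
    have hx1 : p/(N:ℝ) < 1 := by rw [div_lt_one hNpos]; linarith
    have hlog := aux_log_quad (by positivity : (0:ℝ) ≤ p/(N:ℝ)) hx1
    have h1x : 1 - p/(N:ℝ) = s/(N:ℝ) := by
      field_simp
      linarith
    rw [h1x] at hlog
    have hmul := mul_le_mul_of_nonneg_left hlog hNpos.le
    have heq : (N:ℝ) * (-(p/(N:ℝ)) - (p/(N:ℝ))^2/2) = -p - p^2/(2*(N:ℝ)) := by
      field_simp
    have hE1 : E ≤ -(p^2/(2*(N:ℝ))) := by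
      rw [hEe]
      rw [heq] at hmul
      linarith
    have hE2 : E ≤ -p^2/(4*s) := by
      have hN2s : (N:ℝ) ≤ 2*s := by linarith
      have : p^2/(4*s) ≤ p^2/(2*(N:ℝ)) := by
        rw [div_le_div_iff₀ (by positivity) (by positivity)]
        nlinarith [sq_nonneg p]
      calc E ≤ -(p^2/(2*(N:ℝ))) := hE1
        _ ≤ -(p^2/(4*s)) := by linarith
        _ = -p^2/(4*s) := by ring
    have hsN : Real.sqrt s ≤ Real.sqrt (N:ℝ) := Real.sqrt_le_sqrt (by linarith)
    have hsqs : 0 < Real.sqrt s := Real.sqrt_pos.2 hs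
    have hs32 : s ^ (-(3/2) : ℝ) = (s * Real.sqrt s)⁻¹ := by
      rw [Real.rpow_neg hs.le, show (3/2:ℝ) = 1 + 1/2 by norm_num, Real.rpow_add hs,
        Real.rpow_one, Real.sqrt_eq_rpow]
    calc -(PoissonG n s - PoissonG (n-1) s)
        ≤ (p/s) * (Real.exp E / Real.sqrt (N:ℝ)) := hkey
      _ ≤ (p/s) * (Real.exp (-p^2/(4*s)) / Real.sqrt s) := by
          apply mul_le_mul_of_nonneg_left _ (by positivity : (0:ℝ) ≤ p/s)
          exact div_le_div₀ (Real.exp_nonneg _) (Real.exp_le_exp.2 hE2) hsqs hsN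
      _ = s ^ (-(3/2) : ℝ) * p * Real.exp (-p^2/(4*s)) := by
          rw [hs32]
          field_simp
          all_goals ring
      _ ≤ Real.exp 2 * (s ^ (-(3/2) : ℝ) * p * Real.exp (-p^2/(4*s))) := by
          apply le_mul_of_one_le_left (by positivity)
          exact Real.one_le_exp (by norm_num)
      _ = Real.exp 2 * s ^ (-(3/2) : ℝ) * p * Real.exp (-p^2/(4*s)) := by ring
  · -- case p > s
    intro hps
    have hppos : 0 < p := lt_trans hs hps
    have hr0 : 0 < s/(N:ℝ) := by positivity
    have hr1 : s/(N:ℝ) ≤ 1/2 := by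
      rw [div_le_iff₀ hNpos]
      linarith
    have hψ := aux_psi hr0 hr1
    have hpN : p = (N:ℝ) * (1 - s/(N:ℝ)) := by
      field_simp
      linarith
    have hE3 : E + p/4 ≤ Real.log (s/(N:ℝ)) + 5/4 := by
      have h1 : E + p/4 = (N:ℝ) * (Real.log (s/(N:ℝ)) + 5/4 * (1 - s/(N:ℝ))) := by
        rw [hEe]
        linear_combination (5/4) * hpN
      have h2 : (N:ℝ) * (Real.log (s/(N:ℝ)) + 5/4 * (1 - s/(N:ℝ)))
          ≤ 1 * (Real.log (s/(N:ℝ)) + 5/4 * (1 - s/(N:ℝ))) := by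
        apply mul_le_mul_of_nonpos_right _ hψ
        exact_mod_cast hN1
      have h3 : 5/4 * (1 - s/(N:ℝ)) ≤ 5/4 := by
        nlinarith [hr0]
      rw [h1]
      linarith
    have hexpE : Real.exp E ≤ (s/(N:ℝ)) * (Real.exp (5/4) * Real.exp (-p/4)) := by
      have : Real.exp E ≤ Real.exp (Real.log (s/(N:ℝ)) + 5/4 + (-p/4)) := by
        apply Real.exp_le_exp.2
        linarith
      rw [Real.exp_add, Real.exp_add, Real.exp_log hr0] at this
      linarith [this]
    have hsqp : 0 < Real.sqrt p := Real.sqrt_pos.2 hppos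
    have hp12 : p ^ (-(1/2) : ℝ) = (Real.sqrt p)⁻¹ := by
      rw [Real.rpow_neg hppos.le, Real.sqrt_eq_rpow]
    have hcube : p * Real.sqrt p ≤ (N:ℝ) * Real.sqrt (N:ℝ) := by
      have h1 : p ≤ (N:ℝ) := by linarith
      have h2 : Real.sqrt p ≤ Real.sqrt (N:ℝ) := Real.sqrt_le_sqrt h1
      exact mul_le_mul h1 h2 hsqp.le hNpos.le
    calc -(PoissonG n s - PoissonG (n-1) s)
        ≤ (p/s) * (Real.exp E / Real.sqrt (N:ℝ)) := hkey
      _ ≤ (p/s) * ((s/(N:ℝ)) * (Real.exp (5/4) * Real.exp (-p/4)) / Real.sqrt (N:ℝ)) := by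
          apply mul_le_mul_of_nonneg_left _ (by positivity : (0:ℝ) ≤ p/s)
          exact (div_le_div_iff_of_pos_right hsqrtNpos).2 hexpE
      _ = (p / ((N:ℝ) * Real.sqrt (N:ℝ))) * (Real.exp (5/4) * Real.exp (-p/4)) := by
          field_simp
          all_goals ring
      _ ≤ ((Real.sqrt p)⁻¹) * (Real.exp (5/4) * Real.exp (-p/4)) := by
          apply mul_le_mul_of_nonneg_right _ (by positivity)
          rw [inv_eq_one_div, div_le_div_iff₀ (by positivity) hsqp]
          linarith [hcube]
      _ ≤ Real.exp 2 * p ^ (-(1/2) : ℝ) * Real.exp (-p/4) := by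
          rw [hp12]
          have h54 : Real.exp (5/4) ≤ Real.exp 2 := Real.exp_le_exp.2 (by norm_num)
          calc (Real.sqrt p)⁻¹ * (Real.exp (5/4) * Real.exp (-p/4))
              = ((Real.sqrt p)⁻¹ * Real.exp (5/4)) * Real.exp (-p/4) := by ring
            _ ≤ ((Real.sqrt p)⁻¹ * Real.exp 2) * Real.exp (-p/4) :=
                mul_le_mul_of_nonneg_right
                  (mul_le_mul_of_nonneg_left h54 (by positivity)) (Real.exp_nonneg _)
            _ = Real.exp 2 * (Real.sqrt p)⁻¹ * Real.exp (-p/4) := by ring
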